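/- Let α_R, α_F ∈ [0,1), let R be the real 2×2 matrix with rows (1, −α_R) and (−α_F, 1), let T_D : ℝ ⇒ ℝ be a monotone set-valued operator, and define the Ebers–Moll operator T_NPN : ℝ² ⇒ ℝ² by T_NPN(v₁,v₂) := {R·(u₁,u₂) : u₁ ∈ T_D(v₁), u₂ ∈ T_D(v₂)}. Then T_NPN is θ-angle-bounded with θ := π/2 + max(arctan(α_F), arctan(α_R)); that is, ⟨x − y, u − v⟩ ≥ cos(θ)·‖x − y‖·‖u − v‖ for all (x,u), (y,v) in the graph of T_NPN (Euclidean inner product and norm on ℝ²). -/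

import Mathlib

/-- The Ebers–Moll matrix with rows `(1, -αR)` and `(-αF, 1)`, applied to a vector of
`ℝ²` (with the Euclidean inner product and norm). -/
noncomputable def applyEM (aR aF : ℝ) (w : EuclideanSpace ℝ (Fin 2)) :
    EuclideanSpace ℝ (Fin 2) :=
  (WithLp.equiv 2 (Fin 2 → ℝ)).symm
    ((Matrix.of ![![1, -aR], ![-aF, 1]]).mulVec (WithLp.equiv 2 (Fin 2 → ℝ) w))

/-- A set-valued operator `T_D : ℝ ⇒ ℝ` is monotone if `(u - v)(x - y) ≥ 0` whenever
`u ∈ T_D(x)` and `v ∈ T_D(y)`. -/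
def MonotoneSetValued (TD : ℝ → Set ℝ) : Prop :=
  ∀ ⦃x u y v : ℝ⦄, u ∈ TD x → v ∈ TD y → (u - v) * (x - y) ≥ 0

/-- The Ebers–Moll transistor operator `T_NPN : ℝ² ⇒ ℝ²` built from the diode law `T_D`. -/
noncomputable def TNPN (aR aF : ℝ) (TD : ℝ → Set ℝ) (v : EuclideanSpace ℝ (Fin 2)) :
    Set (EuclideanSpace ℝ (Fin 2)) :=
  {w | ∃ u₁ ∈ TD (v 0), ∃ u₂ ∈ TD (v 1),
    w = applyEM aR aF ((WithLp.equiv 2 (Fin 2 → ℝ)).symm ![u₁, u₂])}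

/-- A set-valued operator `A` on a real Hilbert space is `θ`-angle-bounded if
`⟪x - y, u - v⟫ ≥ cos(θ)‖x - y‖‖u - v‖` for all `(x,u)`, `(y,v)` in its graph. -/
def AngleBounded {H : Type*} [NormedAddCommGroup H] [InnerProductSpace ℝ H]
    (θ : ℝ) (A : H → Set H) : Prop :=
  ∀ ⦃x u y v : H⦄, u ∈ A x → v ∈ A y →
    (inner ℝ (x - y) (u - v) : ℝ) ≥ Real.cos θ * (‖x - y‖ * ‖u - v‖)




-- star 1
lemma star1 (a b A B : ℝ) (hb0 : 0 ≤ b) (hba : b ≤ a) (ha1 : a < 1)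
    (hA : 0 ≤ A) (hB : 0 ≤ B) :
    b*((1-a*b)*A+(1+a^2)*B)^2 + a*(a+b)^2*(A*B)
      ≤ (a+b)*(A+B)*((1-a*b)*A+(1+a^2)*B) := by
  have ha0 : 0 ≤ a := hb0.trans hba
  have hab1 : 0 ≤ 1 - a*b := by nlinarith
  have t1 : 0 ≤ a*((1-a*b)*(1+b^2))*A^2 := by positivity
  have t2 : 0 ≤ a*(2*(1-a*b)^2)*(A*B) := by positivity
  have t3 : 0 ≤ a*((1+a^2)*(1-a*b))*B^2 := by positivity
  nlinarith [t1, t2, t3]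

-- star 2
lemma star2 (a b A B : ℝ) (hb0 : 0 ≤ b) (hba : b ≤ a) (ha1 : a < 1)
    (hA : 0 ≤ A) (hB : 0 ≤ B) :
    ((1+a*b)*A+(1-a^2)*B)^2 + 4*a*b*(A*B) ≤ 2*(A+B)*((1+a*b)*A+(1-a^2)*B) := by
  have ha0 : 0 ≤ a := hb0.trans hba
  have h2a : 0 ≤ 2 - a^2 := by nlinarith
  have hmid : 0 ≤ 1 - 2*a*b + a^3*b := by
    nlinarith [sq_nonneg (1 - a^2), mul_nonneg (mul_nonneg (sub_nonneg.2 hba) ha0) h2a]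
  have hab1 : a*b ≤ 1 := by nlinarith
  have t1 : 0 ≤ (1-a^2*b^2)*A^2 :=
    mul_nonneg (by nlinarith [mul_nonneg (sub_nonneg.2 hab1) (by positivity : (0:ℝ) ≤ 1 + a*b)]) (sq_nonneg A)
  have t2 : 0 ≤ 2*(1 - 2*a*b + a^3*b)*(A*B) := by positivity
  have t3 : 0 ≤ (1-a^4)*B^2 := by nlinarith [sq_nonneg B, pow_le_one₀ ha0 ha1.le (n := 4)]
  nlinarith [t1, t2, t3]

-- key abstract lemma: c² ≤ a² t²
lemma key' (a b A B X Y : ℝ) (hb0 : 0 ≤ b) (hba : b ≤ a) (ha1 : a < 1)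
    (hA : 0 ≤ A) (hB : 0 ≤ B) (hXY : A*B = X*Y)
    (hc : A + B - a*X - b*Y < 0) :
    (A + B - a*X - b*Y)^2 ≤ a^2*(X - Y - b*A + a*B)^2 := by
  have ha0 : 0 ≤ a := hb0.trans hba
  have hb1 : b < 1 := lt_of_le_of_lt hba ha1
  have hS : 0 ≤ A + B := by linarith
  have hab1 : 0 ≤ 1 - a*b := by nlinarith
  have hab : 0 < a + b := by
    rcases lt_or_ge 0 (a+b) with h | h
    · exact h
    · have ha : a = 0 := le_antisymm (by linarith) ha0
      have hb : b = 0 := le_antisymm (by linarith) hb0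
      rw [ha, hb] at hc; nlinarith
  rcases le_total Y X with hyx | hyx
  · -- show 0 ≤ a*t + c
    have hD : 0 ≤ a*(X - Y - b*A + a*B) + (A + B - a*X - b*Y) := by
      rcases le_or_gt Y 0 with hY | hY
      · linarith [mul_nonneg hab1 hA, mul_nonneg (sq_nonneg a) hB,
          mul_nonneg hab.le (neg_nonneg.2 hY), hB]
      · -- Y > 0
        by_contra hW
        push_neg at hW
        have hX : 0 < X := lt_of_lt_of_le hY hyx
        have hf : 0 < b*Y^2 - (A+B)*Y + a*(A*B) := by
          have h := mul_pos (by linarith : 0 < a*X + b*Y - (A+B)) hY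
          have hXY' : a*(A*B) = a*(X*Y) := by rw [hXY]
          linarith [h, hXY']
        have hstar := star1 a b A B hb0 hba ha1 hA hB
        have hY2 : Y^2 ≤ A*B := by
          have h := mul_nonneg (sub_nonneg.2 hyx) hY.le
          linarith [h, hXY]
        have hYS : 2*Y ≤ A+B := by nlinarith [sq_nonneg (A-B), mul_pos hY hY]
        have huv : (1-a*b)*A + (1+a^2)*B < (a+b)*Y := by linarith [hW]
        have h1 : 0 < ((a+b)*Y - ((1-a*b)*A + (1+a^2)*B))*(b*((a+b)*Y + ((1-a*b)*A + (1+a^2)*B)) - (a+b)*(A+B)) := by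
          have e1 : 0 < (a+b)^2*(b*Y^2 - (A+B)*Y + a*(A*B)) :=
            mul_pos (by positivity) hf
          have hid : ((a+b)*Y - ((1-a*b)*A + (1+a^2)*B))*(b*((a+b)*Y + ((1-a*b)*A + (1+a^2)*B)) - (a+b)*(A+B))
              = (a+b)^2*(b*Y^2 - (A+B)*Y + a*(A*B))
                - (b*((1-a*b)*A+(1+a^2)*B)^2 + a*(a+b)^2*(A*B) - (a+b)*(A+B)*((1-a*b)*A+(1+a^2)*B)) := by
            ring
          rw [hid]
          linarith [e1, hstar]
        have h2 : 0 < b*((a+b)*Y + ((1-a*b)*A + (1+a^2)*B)) - (a+b)*(A+B) := by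
          rcases mul_pos_iff.1 h1 with ⟨_, h⟩ | ⟨h, _⟩
          · exact h
          · linarith
        have h3 : (a+b)*(A+B) < 2*(b*((a+b)*Y)) := by
          linarith [h2, mul_le_mul_of_nonneg_left huv.le hb0]
        have h4 : A+B < 2*(b*Y) := by
          by_contra h
          push_neg at h
          linarith [h3, mul_le_mul_of_nonneg_left h hab.le]
        have h5 : b*Y ≤ Y := by linarith [mul_le_mul_of_nonneg_right hb1.le hY.le]
        linarith
    linarith [mul_nonneg hD (by linarith :
      0 ≤ a*(X - Y - b*A + a*B) - (A + B - a*X - b*Y))]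
  · -- X ≤ Y: show a*t - c ≤ 0
    have hD : a*(X - Y - b*A + a*B) - (A + B - a*X - b*Y) ≤ 0 := by
      rcases le_or_gt X 0 with hX | hX
      · rcases le_or_gt Y 0 with hY | hY
        · linarith [mul_nonneg ha0 (neg_nonneg.2 hX), mul_nonneg hb0 (neg_nonneg.2 hY)]
        · linarith [mul_nonneg ha0 (neg_nonneg.2 hX), mul_nonneg (sub_nonneg.2 hba) hY.le,
            mul_nonneg (mul_nonneg ha0 hb0) hA,
            mul_nonneg (by nlinarith : (0:ℝ) ≤ 1 - a^2) hB]
      · -- X > 0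
        have hY : 0 < Y := lt_of_lt_of_le hX hyx
        have haa : 0 < a := by
          rcases lt_or_ge 0 a with h | h
          · exact h
          · have ha' : a = 0 := le_antisymm h ha0
            have hb' : b = 0 := le_antisymm (by linarith) hb0
            rw [ha', hb'] at hc; nlinarith
        have hf2 : 0 < a*X^2 - (A+B)*X + b*(A*B) := by
          have h := mul_pos (by linarith : 0 < a*X + b*Y - (A+B)) hX
          have hXY' : b*(A*B) = b*(X*Y) := by rw [hXY]
          linarith [h, hXY']
        have hstar2 := star2 a b A B hb0 hba ha1 hA hB
        have hX2 : X^2 ≤ A*B := by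
          have h := mul_nonneg (sub_nonneg.2 hyx) hX.le
          linarith [h, hXY]
        have hXS : 2*X ≤ A+B := by nlinarith [sq_nonneg (A-B), mul_pos hX hX]
        have hgoal : 2*a*X ≤ (1+a*b)*A + (1-a^2)*B →
            a*(X - Y - b*A + a*B) - (A + B - a*X - b*Y) ≤ 0 := by
          intro h
          linarith [mul_nonneg (sub_nonneg.2 hba) hY.le, h]
        apply hgoal
        by_contra hW
        push_neg at hW
        have h1 : 0 < (2*a*X - ((1+a*b)*A + (1-a^2)*B))*(a*(2*a*X + ((1+a*b)*A + (1-a^2)*B)) - 2*a*(A+B)) := by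
          have e1 : 0 < 4*a^2*(a*X^2 - (A+B)*X + b*(A*B)) :=
            mul_pos (by positivity) hf2
          have e2 := mul_le_mul_of_nonneg_left hstar2 ha0
          have hid : (2*a*X - ((1+a*b)*A + (1-a^2)*B))*(a*(2*a*X + ((1+a*b)*A + (1-a^2)*B)) - 2*a*(A+B))
              = 4*a^2*(a*X^2 - (A+B)*X + b*(A*B))
                - (a*(((1+a*b)*A+(1-a^2)*B)^2 + 4*a*b*(A*B)) - a*(2*(A+B)*((1+a*b)*A+(1-a^2)*B))) := by
            ring
          rw [hid]
          linarith [e1, e2]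
        have h2 : 0 < a*(2*a*X + ((1+a*b)*A + (1-a^2)*B)) - 2*a*(A+B) := by
          rcases mul_pos_iff.1 h1 with ⟨_, h⟩ | ⟨h, _⟩
          · exact h
          · linarith
        have h3 : 2*(A+B) < 2*a*X + ((1+a*b)*A + (1-a^2)*B) := by
          by_contra h
          push_neg at h
          linarith [h2, mul_le_mul_of_nonneg_left h haa.le]
        have h4 : a*X < X := by linarith [mul_lt_mul_of_pos_right ha1 hX]
        linarith
    linarith [mul_nonneg (neg_nonneg.2 hD) (by linarith :
      0 ≤ -(a*(X - Y - b*A + a*B) + (A + B - a*X - b*Y)))]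

lemma final (aR aF d1 d2 p1 p2 : ℝ) (haR0 : 0 ≤ aR) (haR1 : aR < 1)
    (haF0 : 0 ≤ aF) (haF1 : aF < 1) (hA : 0 ≤ d1*p1) (hB : 0 ≤ d2*p2) :
    Real.cos (Real.pi/2 + max (Real.arctan aF) (Real.arctan aR)) *
      (Real.sqrt (d1^2+d2^2) * Real.sqrt ((p1-aR*p2)^2+(p2-aF*p1)^2))
      ≤ d1*(p1-aR*p2) + d2*(p2-aF*p1) := by
  have ha0 : 0 ≤ max aF aR := le_trans haF0 (le_max_left _ _)
  have hcos : Real.cos (Real.pi/2 + max (Real.arctan aF) (Real.arctan aR))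
      = -(max aF aR / Real.sqrt (1 + (max aF aR)^2)) := by
    rw [add_comm, Real.cos_add_pi_div_two,
      ← Real.arctan_strictMono.monotone.map_max, Real.sin_arctan]
  rw [hcos]
  rcases le_or_gt 0 (d1*(p1-aR*p2) + d2*(p2-aF*p1)) with hc | hc
  · have hq : 0 ≤ max aF aR / Real.sqrt (1 + (max aF aR)^2) := by positivity
    have hN : 0 ≤ Real.sqrt (d1^2+d2^2) * Real.sqrt ((p1-aR*p2)^2+(p2-aF*p1)^2) := by
      positivity
    nlinarith [mul_nonneg hq hN]
  · have hkey : (d1*(p1-aR*p2) + d2*(p2-aF*p1))^2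
        ≤ (max aF aR)^2 * (d1*(p2-aF*p1) - d2*(p1-aR*p2))^2 := by
      rcases le_total aF aR with hmax | hmax
      · have h := key' aR aF (d1*p1) (d2*p2) (d1*p2) (d2*p1) haF0 hmax haR1 hA hB
          (by ring) (by linarith [hc])
        rw [max_eq_right hmax]
        linarith [h]
      · have h := key' aF aR (d2*p2) (d1*p1) (d2*p1) (d1*p2) haR0 hmax haF1 hB hA
          (by ring) (by linarith [hc])
        rw [max_eq_left hmax]
        linarith [h]
    have hN12 : Real.sqrt (d1^2+d2^2) * Real.sqrt ((p1-aR*p2)^2+(p2-aF*p1)^2)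
        = Real.sqrt ((d1*(p1-aR*p2) + d2*(p2-aF*p1))^2
            + (d1*(p2-aF*p1) - d2*(p1-aR*p2))^2) := by
      rw [← Real.sqrt_mul (by positivity)]
      congr 1
      ring
    have hs : 0 < Real.sqrt (1 + (max aF aR)^2) := Real.sqrt_pos.2 (by positivity)
    have h1 : (-(d1*(p1-aR*p2) + d2*(p2-aF*p1))) * Real.sqrt (1 + (max aF aR)^2)
        ≤ (max aF aR) * Real.sqrt ((d1*(p1-aR*p2) + d2*(p2-aF*p1))^2
            + (d1*(p2-aF*p1) - d2*(p1-aR*p2))^2) := by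
      have h2 := Real.sqrt_le_sqrt (show
          (d1*(p1-aR*p2) + d2*(p2-aF*p1))^2 * (1 + (max aF aR)^2)
          ≤ (max aF aR)^2 * ((d1*(p1-aR*p2) + d2*(p2-aF*p1))^2
            + (d1*(p2-aF*p1) - d2*(p1-aR*p2))^2) by nlinarith [hkey])
      rw [Real.sqrt_mul (sq_nonneg _), Real.sqrt_mul (sq_nonneg _),
        Real.sqrt_sq_eq_abs, Real.sqrt_sq_eq_abs, abs_of_neg hc, abs_of_nonneg ha0] at h2
      exact h2
    rw [hN12, neg_mul, neg_le, div_mul_eq_mul_div, le_div_iff₀ hs]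
    linarith [h1]

theorem stmt_12 (aR aF : ℝ) (haR : aR ∈ Set.Ico (0 : ℝ) 1) (haF : aF ∈ Set.Ico (0 : ℝ) 1)
    (TD : ℝ → Set ℝ) (hTD : MonotoneSetValued TD) :
    AngleBounded (Real.pi / 2 + max (Real.arctan aF) (Real.arctan aR)) (TNPN aR aF TD) := by
  intro x u y v hu hv
  obtain ⟨u₁, hu₁, u₂, hu₂, rfl⟩ := hu
  obtain ⟨v₁, hv₁, v₂, hv₂, rfl⟩ := hv
  have hA : 0 ≤ (x 0 - y 0) * (u₁ - v₁) := by
    have := hTD hu₁ hv₁; linarith [this]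
  have hB : 0 ≤ (x 1 - y 1) * (u₂ - v₂) := by
    have := hTD hu₂ hv₂; linarith [this]
  have happ : ∀ (a₁ a₂ : ℝ), applyEM aR aF ((WithLp.equiv 2 (Fin 2 → ℝ)).symm ![a₁, a₂]) 0
      = a₁ - aR * a₂ ∧ applyEM aR aF ((WithLp.equiv 2 (Fin 2 → ℝ)).symm ![a₁, a₂]) 1
      = a₂ - aF * a₁ := by
    intro a₁ a₂
    constructor <;>
      simp [applyEM, Matrix.mulVec, dotProduct, Fin.sum_univ_two] <;> ring
  have e0 : (applyEM aR aF ((WithLp.equiv 2 (Fin 2 → ℝ)).symm ![u₁, u₂])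
      - applyEM aR aF ((WithLp.equiv 2 (Fin 2 → ℝ)).symm ![v₁, v₂])) 0
      = (u₁ - v₁) - aR * (u₂ - v₂) := by
    rw [PiLp.sub_apply, (happ u₁ u₂).1, (happ v₁ v₂).1]; ring
  have e1 : (applyEM aR aF ((WithLp.equiv 2 (Fin 2 → ℝ)).symm ![u₁, u₂])
      - applyEM aR aF ((WithLp.equiv 2 (Fin 2 → ℝ)).symm ![v₁, v₂])) 1
      = (u₂ - v₂) - aF * (u₁ - v₁) := by
    rw [PiLp.sub_apply, (happ u₁ u₂).2, (happ v₁ v₂).2]; ring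
  have hinner : (inner ℝ (x - y)
      (applyEM aR aF ((WithLp.equiv 2 (Fin 2 → ℝ)).symm ![u₁, u₂])
      - applyEM aR aF ((WithLp.equiv 2 (Fin 2 → ℝ)).symm ![v₁, v₂])) : ℝ)
      = (x 0 - y 0) * ((u₁ - v₁) - aR * (u₂ - v₂))
        + (x 1 - y 1) * ((u₂ - v₂) - aF * (u₁ - v₁)) := by
    rw [PiLp.inner_apply, Fin.sum_univ_two, e0, e1]
    simp [RCLike.inner_apply, PiLp.sub_apply]
    ring
  have hnx : ‖x - y‖ = Real.sqrt ((x 0 - y 0)^2 + (x 1 - y 1)^2) := by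
    rw [EuclideanSpace.norm_eq, Fin.sum_univ_two]
    simp [PiLp.sub_apply, Real.norm_eq_abs, sq_abs]
  have hnu : ‖applyEM aR aF ((WithLp.equiv 2 (Fin 2 → ℝ)).symm ![u₁, u₂])
      - applyEM aR aF ((WithLp.equiv 2 (Fin 2 → ℝ)).symm ![v₁, v₂])‖
      = Real.sqrt (((u₁ - v₁) - aR * (u₂ - v₂))^2 + ((u₂ - v₂) - aF * (u₁ - v₁))^2) := by
    rw [EuclideanSpace.norm_eq, Fin.sum_univ_two, e0, e1]
    simp [Real.norm_eq_abs, sq_abs]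
  rw [ge_iff_le, hinner, hnx, hnu]
  exact final aR aF (x 0 - y 0) (x 1 - y 1) (u₁ - v₁) (u₂ - v₂)
    haR.1 haR.2 haF.1 haF.2 hA hB
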